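/- Every mixed half-space is a tropical hemispace; that is, if H ⊆ ℝmaxⁿ is the solution set of a single mixed tropical affine inequality and H is a non-empty proper subset of ℝmaxⁿ, then both H and its complement ℝmaxⁿ ∖ H are tropically convex. -/

import Mathlib

attribute [local instance] Classical.propDecidable

/-- The germ semiring `𝔾 = ℝmax ∪ {+∞} ∪ ℝ⁻`: `negInf` is `-∞`, `fin a` is the
real number `a` (an element of `ℝmax`), `germ a` is the germ `a̲ ∈ ℝ⁻`, and
`posInf` is `+∞`. -/
inductive TGerm where
  | negInf : TGerm
  | fin : ℝ → TGerm
  | germ : ℝ → TGerm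
  | posInf : TGerm

namespace TGerm

/-- The modulus `|x| ∈ ℝmax ∪ {+∞} = EReal` of an element of `𝔾`. -/
noncomputable def modulus : TGerm → EReal
  | negInf => ⊥
  | fin a => (a : EReal)
  | germ a => (a : EReal)
  | posInf => ⊤

/-- Whether `x` belongs to the copy `ℝ⁻` of perturbed reals. -/
def isPert : TGerm → Bool
  | germ _ => true
  | _ => false

/-- The total order `≤𝔾` on `𝔾`: `x ≤𝔾 y` iff `|x| < |y|` when
`x ∈ ℝmax ∪ {+∞}` and `y ∈ ℝ⁻`, and `|x| ≤ |y|` otherwise. -/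
def gle (x y : TGerm) : Prop :=
  if isPert x = false ∧ isPert y = true then modulus x < modulus y
  else modulus x ≤ modulus y

/-- The valuation `x(ε) ∈ ℝmax ∪ {+∞} = EReal` of `x ∈ 𝔾` at `ε`. -/
noncomputable def val : TGerm → ℝ → EReal
  | negInf, _ => ⊥
  | fin a, _ => (a : EReal)
  | germ a, ε => ((a - ε : ℝ) : EReal)
  | posInf, _ => ⊤

/-- The addition `⊕` of `𝔾`: the maximum with respect to `≤𝔾`. -/
noncomputable def add (x y : TGerm) : TGerm := if gle x y then y else x

/-- The minimum with respect to `≤𝔾`. -/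
noncomputable def gmin (x y : TGerm) : TGerm := if gle x y then x else y

/-- The tropical sum `⊕ᵢ f i` of a finite family in `𝔾`. -/
noncomputable def gsum {n : ℕ} (f : Fin n → TGerm) : TGerm :=
  (List.ofFn f).foldr add negInf

/-- The minimum (w.r.t. `≤𝔾`) of a finite family in `𝔾`. -/
noncomputable def ginf {n : ℕ} (f : Fin n → TGerm) : TGerm :=
  (List.ofFn f).foldr gmin posInf

/-- The multiplication `⊗` of `𝔾`. -/
def mul : TGerm → TGerm → TGerm
  | negInf, _ => negInf
  | _, negInf => negInf
  | posInf, _ => posInf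
  | _, posInf => posInf
  | fin a, fin b => fin (a + b)
  | fin a, germ b => germ (a + b)
  | germ a, fin b => germ (a + b)
  | germ a, germ b => germ (a + b)

end TGerm

/-- The embedding of `ℝmax = ℝ ∪ {-∞}` into the germ semiring `𝔾`. -/
def toGerm (x : WithBot ℝ) : TGerm := WithBot.recBotCoe TGerm.negInf TGerm.fin x

/-- The embedding of `ℝmax = ℝ ∪ {-∞}` into `ℝmax ∪ {+∞} = EReal`. -/
noncomputable def rmaxToEReal (x : WithBot ℝ) : EReal :=
  WithBot.recBotCoe ⊥ (fun a : ℝ => (a : EReal)) x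

/-- A subset of `ℝmaxⁿ` is tropically convex. -/
def TropConvex {n : ℕ} (C : Set (Fin n → WithBot ℝ)) : Prop :=
  ∀ u ∈ C, ∀ v ∈ C, ∀ lam mu : WithBot ℝ, max lam mu = 0 →
    (fun i => max (lam + u i) (mu + v i)) ∈ C

/-- A subset of `ℝmaxⁿ` is a tropical polyhedron with mixed constraints: it is
the solution set of finitely many mixed tropical affine inequalities
`a₀ ⊕ a₁x₁ ⊕ ⋯ ⊕ aₙxₙ ≤𝔾 b₀ ⊕ b₁x₁ ⊕ ⋯ ⊕ bₙxₙ` with `aᵢ ∈ ℝmax`, `bᵢ ∈ 𝔾`. -/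
def IsMixedPoly {n : ℕ} (P : Set (Fin n → WithBot ℝ)) : Prop :=
  ∃ (p : ℕ) (a₀ : Fin p → WithBot ℝ) (a : Fin p → Fin n → WithBot ℝ)
    (b₀ : Fin p → TGerm) (b : Fin p → Fin n → TGerm),
    P = { x | ∀ k,
      (TGerm.add (toGerm (a₀ k))
          (TGerm.gsum fun i => (toGerm (a k i)).mul (toGerm (x i)))).gle
        (TGerm.add (b₀ k) (TGerm.gsum fun i => (b k i).mul (toGerm (x i)))) }

namespace TGerm

theorem gle_refl (x : TGerm) : gle x x := by
  cases x <;> simp [gle, isPert, modulus]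

theorem gle_trans : ∀ x y z : TGerm, gle x y → gle y z → gle x z := by
  intro x y z
  cases x <;> cases y <;> cases z <;>
    simp only [gle, isPert, modulus, if_true, if_false, and_true, and_false,
      and_self, true_and, false_and, if_neg, reduceIte] <;>
    intro h1 h2 <;>
    first
      | assumption
      | exact le_trans h1 h2
      | exact lt_of_le_of_lt h1 h2
      | exact lt_of_lt_of_le h1 h2
      | exact le_of_lt (lt_of_lt_of_le h1 h2)
      | exact le_of_lt (lt_of_le_of_lt h1 h2)
      | simp_all

theorem gle_antisymm : ∀ x y : TGerm, gle x y → gle y x → x = y := by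
  intro x y
  cases x <;> cases y <;>
    simp only [gle, isPert, modulus, reduceIte, and_self, and_true, true_and,
      and_false, false_and] <;>
    intro h1 h2 <;>
    first
      | rfl
      | (exfalso; exact absurd h1 (not_le_of_gt h2))
      | (exfalso; exact absurd h2 (not_le_of_gt h1))
      | (exfalso; exact absurd h1 (not_lt_of_ge h2))
      | (congr 1; exact_mod_cast le_antisymm h1 h2)
      | simp_all

theorem gle_total : ∀ x y : TGerm, gle x y ∨ gle y x := by
  intro x y
  cases x <;> cases y <;>
    simp only [gle, isPert, modulus, reduceIte, and_self, and_true, true_and,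
      and_false, false_and] <;>
    first
      | exact Or.inl le_rfl
      | exact Or.inl bot_le
      | exact Or.inr bot_le
      | exact Or.inl le_top
      | exact Or.inr le_top
      | exact le_total _ _
      | exact lt_or_ge _ _
      | exact (lt_or_ge _ _).symm
      | simp_all

end TGerm
namespace TGerm

noncomputable instance : LinearOrder TGerm where
  le := gle
  le_refl := gle_refl
  le_trans := gle_trans
  le_antisymm := gle_antisymm
  le_total := gle_total
  toDecidableLE := fun _ _ => Classical.propDecidable _

theorem le_def (x y : TGerm) : (x ≤ y) = gle x y := rfl

instance : OrderBot TGerm where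
  bot := negInf
  bot_le x := by
    cases x <;> simp [le_def, gle, isPert, modulus] <;> exact bot_lt_iff_ne_bot.2 (by simp)

theorem bot_def : (⊥ : TGerm) = negInf := rfl

theorem add_eq_max (x y : TGerm) : add x y = max x y := by
  rw [max_def, add]
  rfl

theorem mul_negInf (c : TGerm) : mul c negInf = negInf := by cases c <;> rfl

theorem mul_comm' (x y : TGerm) : mul x y = mul y x := by
  cases x <;> cases y <;> simp [mul] <;> ring

theorem mul_assoc' (x y z : TGerm) : mul (mul x y) z = mul x (mul y z) := by
  cases x <;> cases y <;> cases z <;> simp [mul] <;> ring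

theorem mul_one' (x : TGerm) : mul (fin 0) x = x := by
  cases x <;> simp [mul]

theorem mul_mono (c : TGerm) : Monotone (mul c) := by
  intro x y h
  rw [le_def] at *
  cases c <;> cases x <;> cases y <;>
    simp_all [mul, gle, isPert, modulus] <;> (try norm_cast) <;> linarith

theorem mul_fin_le_iff (l : ℝ) (x y : TGerm) :
    mul (fin l) x ≤ mul (fin l) y ↔ x ≤ y := by
  simp only [le_def]
  cases x <;> cases y <;> simp [mul, gle, isPert, modulus] <;>
    (try constructor) <;> (try intro h) <;> (try norm_cast at h) <;>
    (try norm_cast) <;> first | linarith | exact (EReal.coe_ne_top _ h)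

theorem mul_fin_strictMono (l : ℝ) : StrictMono (mul (fin l)) := by
  intro x y h
  rw [lt_iff_le_not_ge] at h ⊢
  exact ⟨mul_mono _ h.1, fun hc => h.2 ((mul_fin_le_iff l y x).1 hc)⟩

theorem mul_map_max (c x y : TGerm) : mul c (max x y) = max (mul c x) (mul c y) :=
  (mul_mono c).map_max

theorem gsum_zero (f : Fin 0 → TGerm) : gsum f = negInf := rfl

theorem gsum_succ {n : ℕ} (f : Fin (n + 1) → TGerm) :
    gsum f = add (f 0) (gsum fun i : Fin n => f i.succ) := by
  simp [gsum, List.ofFn_succ]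

theorem gsum_max {n : ℕ} (f g : Fin n → TGerm) :
    gsum (fun i => max (f i) (g i)) = max (gsum f) (gsum g) := by
  induction n with
  | zero => simp [gsum_zero, max_self]
  | succ m ih =>
    rw [gsum_succ, gsum_succ f, gsum_succ g, add_eq_max, add_eq_max, add_eq_max,
      ih (fun i => f i.succ) (fun i => g i.succ)]
    exact max_max_max_comm _ _ _ _

theorem mul_gsum {n : ℕ} (c : TGerm) (f : Fin n → TGerm) :
    mul c (gsum f) = gsum fun i => mul c (f i) := by
  induction n with
  | zero => simp [gsum_zero, mul_negInf]
  | succ m ih =>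
    rw [gsum_succ, gsum_succ (fun i => mul c (f i)), add_eq_max, add_eq_max,
      mul_map_max, ih]

end TGerm

theorem toGerm_bot : toGerm ⊥ = TGerm.negInf := rfl

theorem toGerm_coe (a : ℝ) : toGerm (a : WithBot ℝ) = TGerm.fin a := rfl

theorem toGerm_zero : toGerm (0 : WithBot ℝ) = TGerm.fin 0 := rfl

theorem toGerm_add (p q : WithBot ℝ) :
    toGerm (p + q) = TGerm.mul (toGerm p) (toGerm q) := by
  cases p <;> cases q <;>
    simp [toGerm, TGerm.mul, WithBot.recBotCoe, ← WithBot.coe_add]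

theorem fin_le_fin {a b : ℝ} : TGerm.fin a ≤ TGerm.fin b ↔ a ≤ b := by
  simp [TGerm.le_def, TGerm.gle, TGerm.isPert, TGerm.modulus]

theorem toGerm_mono : Monotone toGerm := by
  intro p q h
  cases p <;> cases q <;> simp_all [toGerm, WithBot.recBotCoe]
  · exact bot_le
  · exact fin_le_fin.2 (by exact_mod_cast h)

theorem toGerm_max (p q : WithBot ℝ) :
    toGerm (max p q) = max (toGerm p) (toGerm q) := toGerm_mono.map_max
theorem mul_left_comm' (x y z : TGerm) :
    TGerm.mul x (TGerm.mul y z) = TGerm.mul y (TGerm.mul x z) := by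
  rw [← TGerm.mul_assoc', TGerm.mul_comm' x y, TGerm.mul_assoc']

theorem c0_comb (lam mu : WithBot ℝ) (hmax : max lam mu = 0) (c₀ : TGerm) :
    max (TGerm.mul (toGerm lam) c₀) (TGerm.mul (toGerm mu) c₀) = c₀ := by
  have hlam : lam ≤ 0 := le_of_max_le_left hmax.le
  have hmu : mu ≤ 0 := le_of_max_le_right hmax.le
  have key : ∀ ν : WithBot ℝ, ν ≤ 0 → TGerm.mul (toGerm ν) c₀ ≤ c₀ := by
    intro ν hν
    calc TGerm.mul (toGerm ν) c₀ = TGerm.mul c₀ (toGerm ν) := TGerm.mul_comm' _ _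
      _ ≤ TGerm.mul c₀ (toGerm 0) := TGerm.mul_mono c₀ (toGerm_mono hν)
      _ = TGerm.mul (TGerm.fin 0) c₀ := by rw [TGerm.mul_comm', toGerm_zero]
      _ = c₀ := TGerm.mul_one' c₀
  rcases max_choice lam mu with h | h <;> rw [h] at hmax
  · rw [hmax, toGerm_zero, TGerm.mul_one']
    exact max_eq_left (key mu hmu)
  · rw [hmax, toGerm_zero, TGerm.mul_one']
    exact max_eq_right (key lam hlam)

theorem affine_comb {n : ℕ} (c₀ : TGerm) (c : Fin n → TGerm)
    (u v : Fin n → WithBot ℝ) (lam mu : WithBot ℝ) (hmax : max lam mu = 0) :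
    TGerm.add c₀ (TGerm.gsum fun i => (c i).mul (toGerm (max (lam + u i) (mu + v i))))
      = max
        (TGerm.mul (toGerm lam)
          (TGerm.add c₀ (TGerm.gsum fun i => (c i).mul (toGerm (u i)))))
        (TGerm.mul (toGerm mu)
          (TGerm.add c₀ (TGerm.gsum fun i => (c i).mul (toGerm (v i))))) := by
  have h1 : (fun i => (c i).mul (toGerm (max (lam + u i) (mu + v i))))
      = fun i => max (TGerm.mul (toGerm lam) ((c i).mul (toGerm (u i))))
          (TGerm.mul (toGerm mu) ((c i).mul (toGerm (v i)))) := by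
    funext i
    rw [toGerm_max, toGerm_add, toGerm_add, TGerm.mul_map_max,
      mul_left_comm' (c i) (toGerm lam), mul_left_comm' (c i) (toGerm mu)]
  rw [h1, TGerm.gsum_max, ← TGerm.mul_gsum, ← TGerm.mul_gsum,
    TGerm.add_eq_max, TGerm.add_eq_max, TGerm.add_eq_max,
    TGerm.mul_map_max, TGerm.mul_map_max]
  conv_lhs => rw [← c0_comb lam mu hmax c₀]
  exact max_max_max_comm _ _ _ _
theorem negInf_mul (x : TGerm) : TGerm.mul TGerm.negInf x = (⊥ : TGerm) := by
  cases x <;> rfl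


theorem statement_12 (n : ℕ) (a₀ : WithBot ℝ) (a : Fin n → WithBot ℝ)
    (b₀ : TGerm) (b : Fin n → TGerm)
    (H : Set (Fin n → WithBot ℝ))
    (hH : H = { x | (TGerm.add (toGerm a₀)
                      (TGerm.gsum fun i => (toGerm (a i)).mul (toGerm (x i)))).gle
                    (TGerm.add b₀ (TGerm.gsum fun i => (b i).mul (toGerm (x i)))) })
    (hne : H.Nonempty) (hproper : H ≠ Set.univ) :
    TropConvex H ∧ TropConvex Hᶜ := by
  subst hH
  constructor
  · intro u hu v hv lam mu hmax
    simp only [Set.mem_setOf_eq, ← TGerm.le_def] at hu hv ⊢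
    rw [affine_comb (toGerm a₀) (fun i => toGerm (a i)) u v lam mu hmax,
      affine_comb b₀ b u v lam mu hmax]
    exact max_le_max (TGerm.mul_mono _ hu) (TGerm.mul_mono _ hv)
  · intro u hu v hv lam mu hmax
    simp only [Set.mem_compl_iff, Set.mem_setOf_eq, ← TGerm.le_def, not_le] at hu hv ⊢
    rw [affine_comb (toGerm a₀) (fun i => toGerm (a i)) u v lam mu hmax,
      affine_comb b₀ b u v lam mu hmax]
    apply max_lt
    · cases lam with
      | bot =>
        have hmu : mu = 0 := by simpa using hmax
        subst hmu
        rw [show toGerm (⊥ : WithBot ℝ) = TGerm.negInf from rfl, negInf_mul]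
        refine lt_of_lt_of_le ?_ (le_max_right _ _)
        rw [toGerm_zero, TGerm.mul_one']
        exact bot_le.trans_lt hv
      | coe l =>
        exact lt_of_lt_of_le (TGerm.mul_fin_strictMono l hu) (le_max_left _ _)
    · cases mu with
      | bot =>
        have hlam : lam = 0 := by simpa using hmax
        subst hlam
        rw [show toGerm (⊥ : WithBot ℝ) = TGerm.negInf from rfl, negInf_mul]
        refine lt_of_lt_of_le ?_ (le_max_left _ _)
        rw [toGerm_zero, TGerm.mul_one']
        exact bot_le.trans_lt hu
      | coe m =>
        exact lt_of_lt_of_le (TGerm.mul_fin_strictMono m hv) (le_max_right _ _)
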